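/- The number of labeled DAGs on n vertices satisfies the recurrence A_n = sum_{k=1}^{n} (-1)^{k+1} * C(n,k) * 2^{k(n-k)} * A_{n-k}, with A_0 = 1. -/

import Mathlib

open Filter Finset

/-- A directed graph (given by its edge relation) is acyclic iff no vertex lies on a
directed cycle, i.e. the transitive closure is irreflexive. -/
def DigraphAcyclic {V : Type*} (g : V → V → Prop) : Prop :=
  ∀ a, ¬ Relation.TransGen g a a

/-- The number of labeled DAGs on `n` vertices. -/
noncomputable def dagCount (n : ℕ) : ℕ :=
  Nat.card {g : Fin n → Fin n → Bool // DigraphAcyclic fun x y => g x y = true}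

/-- The number of connected labeled DAGs on `n` vertices (connected means the
underlying undirected graph is connected). -/
noncomputable def connDagCount (n : ℕ) : ℕ :=
  Nat.card {g : Fin n → Fin n → Bool //
    (DigraphAcyclic fun x y => g x y = true) ∧
    ∀ a b : Fin n, Relation.ReflTransGen (fun x y => g x y = true ∨ g y x = true) a b}

-- L2: relabeling
lemma acyclic_relabel {α β : Type*} (e : α ≃ β) (g : β → β → Bool)
    (h : DigraphAcyclic fun x y => g x y = true) :
    DigraphAcyclic fun x y => g (e x) (e y) = true := by
  intro a ha
  exact h (e a) (Relation.TransGen.lift e (fun _ _ hxy => hxy) a a ha)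

lemma acyclic_relabel_iff {α β : Type*} (e : α ≃ β) (g : β → β → Bool) :
    (DigraphAcyclic fun x y => g (e x) (e y) = true) ↔
      (DigraphAcyclic fun x y => g x y = true) := by
  constructor
  · intro h a ha
    exact acyclic_relabel e.symm (fun x y => g (e x) (e y)) h a (by simpa using ha)
  · exact acyclic_relabel e g

-- L1: every nonempty acyclic digraph has a source
lemma exists_source {n : ℕ} (hn : 0 < n) (g : Fin n → Fin n → Bool)
    (hg : DigraphAcyclic fun x y => g x y = true) :
    ∃ a : Fin n, ∀ x, ¬ g x a = true := by
  set r : Fin n → Fin n → Prop := Relation.TransGen fun x y => g x y = true with hr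
  haveI : IsTrans (Fin n) r := ⟨fun _ _ _ => Relation.TransGen.trans⟩
  haveI : IsIrrefl (Fin n) r := ⟨hg⟩
  have wf := Finite.wellFounded_of_trans_of_irrefl r
  obtain ⟨a, -, ha⟩ := wf.has_min Set.univ ⟨⟨0, hn⟩, trivial⟩
  exact ⟨a, fun x hx => ha x trivial (Relation.TransGen.single hx)⟩

-- L3: restriction
lemma transGen_restrict {n : ℕ} {T : Finset (Fin n)} {g : Fin n → Fin n → Bool}
    (hT : ∀ x y, y ∈ T → ¬ g x y = true) {a b : Fin n}
    (h : Relation.TransGen (fun x y => g x y = true) a b) (ha : a ∉ T) :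
    ∃ hb : b ∉ T,
      Relation.TransGen (fun x y : {v : Fin n // v ∉ T} => g x.1 y.1 = true) ⟨a, ha⟩ ⟨b, hb⟩ := by
  induction h with
  | single hedge =>
    have hb : _ ∉ T := fun hmem => hT _ _ hmem hedge
    exact ⟨hb, Relation.TransGen.single hedge⟩
  | tail _ hedge ih =>
    obtain ⟨hb', htg⟩ := ih
    have hc : _ ∉ T := fun hmem => hT _ _ hmem hedge
    exact ⟨hc, htg.tail hedge⟩

lemma acyclic_restrict_iff {n : ℕ} {T : Finset (Fin n)} {g : Fin n → Fin n → Bool}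
    (hT : ∀ x y, y ∈ T → ¬ g x y = true) :
    (DigraphAcyclic fun x y => g x y = true) ↔
      DigraphAcyclic (fun x y : {v : Fin n // v ∉ T} => g x.1 y.1 = true) := by
  constructor
  · intro h a ha
    exact h a.1 (Relation.TransGen.lift Subtype.val (fun _ _ hxy => hxy) a a ha)
  · intro h a ha
    have haT : a ∉ T := by
      obtain ⟨c, -, hedge⟩ := Relation.TransGen.tail'_iff.mp ha
      exact fun hmem => hT _ _ hmem hedge
    obtain ⟨_, htg⟩ := transGen_restrict hT ha haT
    exact h ⟨a, haT⟩ htg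

-- relabeling equivalence of DAG sets
noncomputable def graphEquiv {α β : Type*} (e : α ≃ β) :
    {g : α → α → Bool // DigraphAcyclic fun x y => g x y = true} ≃
      {g : β → β → Bool // DigraphAcyclic fun x y => g x y = true} where
  toFun g := ⟨fun x y => g.1 (e.symm x) (e.symm y),
    (acyclic_relabel_iff e.symm g.1).mpr g.2⟩
  invFun h := ⟨fun x y => h.1 (e x) (e y), (acyclic_relabel_iff e h.1).mpr h.2⟩
  left_inv g := by ext x y; simp
  right_inv h := by ext x y; simp

lemma card_graphs (α : Type*) [Fintype α] :
    Nat.card {g : α → α → Bool // DigraphAcyclic fun x y => g x y = true} =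
      dagCount (Fintype.card α) :=
  Nat.card_congr (graphEquiv (Fintype.equivFin α))

-- the decomposition equivalence
noncomputable def sourceEquiv {n : ℕ} (T : Finset (Fin n)) :
    {g : Fin n → Fin n → Bool // (DigraphAcyclic fun x y => g x y = true) ∧
        ∀ x y, y ∈ T → ¬ g x y = true} ≃
      ({x : Fin n // x ∈ T} → {x : Fin n // x ∉ T} → Bool) ×
        {h : {x : Fin n // x ∉ T} → {x : Fin n // x ∉ T} → Bool //
          DigraphAcyclic fun x y => h x y = true} where
  toFun g := ⟨fun x y => g.1 x y,
    ⟨fun x y => g.1 x y, (acyclic_restrict_iff g.2.2).mp g.2.1⟩⟩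
  invFun p := ⟨fun x y =>
      if hy : y ∈ T then false
      else if hx : x ∈ T then p.1 ⟨x, hx⟩ ⟨y, hy⟩ else p.2.1 ⟨x, hx⟩ ⟨y, hy⟩, by
    have hno : ∀ x y, y ∈ T → ¬ (if hy : y ∈ T then false
        else if hx : x ∈ T then p.1 ⟨x, hx⟩ ⟨y, hy⟩ else p.2.1 ⟨x, hx⟩ ⟨y, hy⟩) = true := by
      intro x y hy
      simp [hy]
    refine ⟨(acyclic_restrict_iff hno).mpr ?_, hno⟩
    have heq : (fun x y : {v : Fin n // v ∉ T} =>
        (if hy : (y : Fin n) ∈ T then false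
          else if hx : (x : Fin n) ∈ T then p.1 ⟨x, hx⟩ ⟨y, hy⟩
          else p.2.1 ⟨x, hx⟩ ⟨y, hy⟩) = true)
        = fun x y : {v : Fin n // v ∉ T} => p.2.1 x y = true := by
      funext x y
      simp [x.2, y.2]
    rw [heq]
    exact p.2.2⟩
  left_inv g := by
    ext x y
    by_cases hy : y ∈ T
    · have := g.2.2 x y hy
      simp only [Bool.not_eq_true] at this
      simp [hy, this]
    · by_cases hx : x ∈ T <;> simp [hy, hx]
  right_inv p := by
    refine Prod.ext ?_ (Subtype.ext ?_)
    · funext x y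
      simp [y.2, x.2]
    · funext x y
      simp [y.2, x.2]

lemma card_notmem {n : ℕ} (T : Finset (Fin n)) :
    Fintype.card {x : Fin n // x ∉ T} = n - T.card := by
  simp [Fintype.card_subtype_compl]

lemma card_N {n : ℕ} (T : Finset (Fin n)) :
    Nat.card {g : Fin n → Fin n → Bool // (DigraphAcyclic fun x y => g x y = true) ∧
        ∀ x y, y ∈ T → ¬ g x y = true} =
      2 ^ (T.card * (n - T.card)) * dagCount (n - T.card) := by
  rw [Nat.card_congr (sourceEquiv T), Nat.card_prod, card_graphs, card_notmem]
  congr 1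
  rw [Nat.card_eq_fintype_card, Fintype.card_fun, Fintype.card_fun, Fintype.card_bool,
    card_notmem, Fintype.card_coe, ← pow_mul, Nat.mul_comm]

open scoped Classical in
lemma key_sum {n : ℕ} (hn : 1 ≤ n) :
    ∑ T ∈ (Finset.univ : Finset (Fin n)).powerset,
      (-1 : ℤ) ^ (T.card + 1) *
        (Nat.card {g : Fin n → Fin n → Bool //
          (DigraphAcyclic fun x y => g x y = true) ∧
          ∀ x y, y ∈ T → ¬ g x y = true} : ℤ) = 0 := by
  have hN : ∀ T : Finset (Fin n),
      (Nat.card {g : Fin n → Fin n → Bool //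
          (DigraphAcyclic fun x y => g x y = true) ∧
          ∀ x y, y ∈ T → ¬ g x y = true} : ℤ) =
        ∑ g : Fin n → Fin n → Bool,
          if (DigraphAcyclic fun x y => g x y = true) ∧
              ∀ x y, y ∈ T → ¬ g x y = true then 1 else 0 := by
    intro T
    rw [Nat.card_eq_fintype_card, Fintype.card_subtype, Finset.sum_boole]
  calc ∑ T ∈ (Finset.univ : Finset (Fin n)).powerset,
      (-1 : ℤ) ^ (T.card + 1) * (Nat.card _ : ℤ)
      = ∑ g : Fin n → Fin n → Bool, ∑ T ∈ (Finset.univ : Finset (Fin n)).powerset,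
          (-1 : ℤ) ^ (T.card + 1) *
            (if (DigraphAcyclic fun x y => g x y = true) ∧
              ∀ x y, y ∈ T → ¬ g x y = true then 1 else 0) := by
        rw [Finset.sum_comm]
        refine Finset.sum_congr rfl fun T _ => ?_
        rw [hN T, Finset.mul_sum]
    _ = 0 := by
        refine Finset.sum_eq_zero fun g _ => ?_
        by_cases hg : DigraphAcyclic fun x y => g x y = true
        · set S : Finset (Fin n) := Finset.univ.filter (fun y => ∀ x, ¬ g x y = true) with hS
          have hiff : ∀ T : Finset (Fin n),
              ((DigraphAcyclic fun x y => g x y = true) ∧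
                ∀ x y, y ∈ T → ¬ g x y = true) ↔ T ⊆ S := by
            intro T
            constructor
            · rintro ⟨-, h⟩ y hy
              simp only [hS, Finset.mem_filter, Finset.mem_univ, true_and]
              exact fun x => h x y hy
            · intro h
              refine ⟨hg, fun x y hy => ?_⟩
              have := h hy
              simp only [hS, Finset.mem_filter] at this
              exact this.2 x
          simp only [hiff]
          have : ∀ T ∈ (Finset.univ : Finset (Fin n)).powerset,
              (-1 : ℤ) ^ (T.card + 1) * (if T ⊆ S then 1 else 0)
                = if T ⊆ S then (-1 : ℤ) ^ (T.card + 1) else 0 := by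
            intro T _
            split <;> simp
          rw [Finset.sum_congr rfl this, Finset.sum_ite]
          simp only [smul_zero, Finset.sum_const, add_zero]
          have hfilter : (Finset.univ : Finset (Fin n)).powerset.filter (· ⊆ S) = S.powerset := by
            ext T
            simp [Finset.mem_powerset]
          rw [hfilter]
          have hSne : S.Nonempty := by
            obtain ⟨a, ha⟩ := exists_source (by omega) g hg
            exact ⟨a, by simp [hS, ha]⟩
          have := Finset.sum_powerset_neg_one_pow_card_of_nonempty hSne
          simp only [pow_succ, mul_comm]
          simp [← Finset.sum_mul, this]
        · refine Finset.sum_eq_zero fun T _ => ?_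
          rw [if_neg (fun h => hg h.1), mul_zero]

theorem dagCount_recurrence :
    dagCount 0 = 1 ∧
    ∀ n : ℕ, 1 ≤ n →
      (dagCount n : ℤ) =
        ∑ k ∈ Finset.Icc 1 n,
          (-1 : ℤ) ^ (k + 1) * (n.choose k) * 2 ^ (k * (n - k)) * dagCount (n - k) := by
  constructor
  · have hall : ∀ g : Fin 0 → Fin 0 → Bool, DigraphAcyclic fun x y => g x y = true :=
      fun g a => a.elim0
    rw [dagCount, Nat.card_congr (Equiv.subtypeUnivEquiv hall), Nat.card_eq_fintype_card]
    simp
  · intro n hn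
    set f : ℕ → ℤ := fun k => (-1 : ℤ) ^ (k + 1) * 2 ^ (k * (n - k)) * dagCount (n - k) with hf
    have hterm : ∀ T ∈ (Finset.univ : Finset (Fin n)).powerset,
        (-1 : ℤ) ^ (T.card + 1) *
          (Nat.card {g : Fin n → Fin n → Bool //
            (DigraphAcyclic fun x y => g x y = true) ∧
            ∀ x y, y ∈ T → ¬ g x y = true} : ℤ) = f T.card := by
      intro T _
      rw [card_N, hf]
      push_cast
      ring
    have hkey := key_sum (n := n) hn
    rw [Finset.sum_congr rfl hterm, Finset.sum_powerset_apply_card] at hkey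
    have hcard : (Finset.univ : Finset (Fin n)).card = n := by simp
    rw [hcard] at hkey
    have hsplit : Finset.range (n + 1) = insert 0 (Finset.Icc 1 n) := by
      ext k; simp [Finset.mem_range, Finset.mem_Icc]; omega
    rw [hsplit, Finset.sum_insert (by simp)] at hkey
    have h0 : n.choose 0 • f 0 = -(dagCount n : ℤ) := by
      simp [hf]
    rw [h0] at hkey
    have : (dagCount n : ℤ) = ∑ k ∈ Finset.Icc 1 n, n.choose k • f k := by linarith
    rw [this]
    refine Finset.sum_congr rfl fun k _ => ?_
    rw [hf]
    push_cast
    ring
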